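/- For every n ≥ 1 and λ ∈ k, the representation R_n(λ) of the quiver Q⁰ satisfies the relation m_{b₁}∘m_{a₁} + m_{b₂}∘m_{a₂} + m_{b₃}∘m_{a₃} = 0, every endomorphism of R_n(λ) is of the form (f,f,f,f,f) for a single n×n matrix f commuting with J_n(λ), R_n(λ) is indecomposable with local endomorphism ring, and R_n(λ) ≅ R_m(μ) if and only if n = m and λ = μ. (This is the continuous series of representations appearing in the analysis of the degenerated tubular algebra of type (2,2,2,2;0).) -/

import Mathlib

variable (k : Type) [Field k]

/-- A finite-dimensional representation of the quiver `Q⁰` with vertices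
`x,1,2,3,y` and arrows `aᵢ : x → i`, `bᵢ : i → y` for `i = 1,2,3`. -/
structure Q0Rep where
  Vx : Type
  V1 : Type
  V2 : Type
  V3 : Type
  Vy : Type
  [acgx : AddCommGroup Vx]
  [acg1 : AddCommGroup V1]
  [acg2 : AddCommGroup V2]
  [acg3 : AddCommGroup V3]
  [acgy : AddCommGroup Vy]
  [modx : Module k Vx]
  [mod1 : Module k V1]
  [mod2 : Module k V2]
  [mod3 : Module k V3]
  [mody : Module k Vy]
  [finx : FiniteDimensional k Vx]
  [fin1 : FiniteDimensional k V1]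
  [fin2 : FiniteDimensional k V2]
  [fin3 : FiniteDimensional k V3]
  [finy : FiniteDimensional k Vy]
  ma1 : Vx →ₗ[k] V1
  ma2 : Vx →ₗ[k] V2
  ma3 : Vx →ₗ[k] V3
  mb1 : V1 →ₗ[k] Vy
  mb2 : V2 →ₗ[k] Vy
  mb3 : V3 →ₗ[k] Vy

attribute [instance] Q0Rep.acgx Q0Rep.acg1 Q0Rep.acg2 Q0Rep.acg3 Q0Rep.acgy
  Q0Rep.modx Q0Rep.mod1 Q0Rep.mod2 Q0Rep.mod3 Q0Rep.mody
  Q0Rep.finx Q0Rep.fin1 Q0Rep.fin2 Q0Rep.fin3 Q0Rep.finy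

variable {k}

/-- Morphisms of representations of `Q⁰`. -/
@[ext]
structure Q0Hom (M N : Q0Rep k) where
  fx : M.Vx →ₗ[k] N.Vx
  f1 : M.V1 →ₗ[k] N.V1
  f2 : M.V2 →ₗ[k] N.V2
  f3 : M.V3 →ₗ[k] N.V3
  fy : M.Vy →ₗ[k] N.Vy
  comm_a1 : f1 ∘ₗ M.ma1 = N.ma1 ∘ₗ fx
  comm_a2 : f2 ∘ₗ M.ma2 = N.ma2 ∘ₗ fx
  comm_a3 : f3 ∘ₗ M.ma3 = N.ma3 ∘ₗ fx
  comm_b1 : fy ∘ₗ M.mb1 = N.mb1 ∘ₗ f1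
  comm_b2 : fy ∘ₗ M.mb2 = N.mb2 ∘ₗ f2
  comm_b3 : fy ∘ₗ M.mb3 = N.mb3 ∘ₗ f3

/-- Two representations are isomorphic iff there is a morphism all of whose
components are bijective. -/
def Q0Iso (M N : Q0Rep k) : Prop :=
  ∃ f : Q0Hom M N, Function.Bijective f.fx ∧ Function.Bijective f.f1 ∧
    Function.Bijective f.f2 ∧ Function.Bijective f.f3 ∧ Function.Bijective f.fy

/-- The zero representation(s). -/
def Q0Rep.IsZeroRep (M : Q0Rep k) : Prop :=
  Subsingleton M.Vx ∧ Subsingleton M.V1 ∧ Subsingleton M.V2 ∧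
    Subsingleton M.V3 ∧ Subsingleton M.Vy

/-- Vertexwise direct sum of representations. -/
def Q0Rep.dsum (M N : Q0Rep k) : Q0Rep k where
  Vx := M.Vx × N.Vx
  V1 := M.V1 × N.V1
  V2 := M.V2 × N.V2
  V3 := M.V3 × N.V3
  Vy := M.Vy × N.Vy
  ma1 := M.ma1.prodMap N.ma1
  ma2 := M.ma2.prodMap N.ma2
  ma3 := M.ma3.prodMap N.ma3
  mb1 := M.mb1.prodMap N.mb1
  mb2 := M.mb2.prodMap N.mb2
  mb3 := M.mb3.prodMap N.mb3

/-- A representation is indecomposable if it is nonzero and not isomorphic to a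
direct sum of two nonzero representations. -/
def Q0Rep.Indecomposable (M : Q0Rep k) : Prop :=
  ¬ M.IsZeroRep ∧ ∀ A B : Q0Rep k, Q0Iso M (A.dsum B) → A.IsZeroRep ∨ B.IsZeroRep

lemma Q0Hom.comm_a1_apply {M N : Q0Rep k} (f : Q0Hom M N) (x : M.Vx) :
    f.f1 (M.ma1 x) = N.ma1 (f.fx x) := LinearMap.congr_fun f.comm_a1 x

lemma Q0Hom.comm_a2_apply {M N : Q0Rep k} (f : Q0Hom M N) (x : M.Vx) :
    f.f2 (M.ma2 x) = N.ma2 (f.fx x) := LinearMap.congr_fun f.comm_a2 x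

lemma Q0Hom.comm_a3_apply {M N : Q0Rep k} (f : Q0Hom M N) (x : M.Vx) :
    f.f3 (M.ma3 x) = N.ma3 (f.fx x) := LinearMap.congr_fun f.comm_a3 x

lemma Q0Hom.comm_b1_apply {M N : Q0Rep k} (f : Q0Hom M N) (x : M.V1) :
    f.fy (M.mb1 x) = N.mb1 (f.f1 x) := LinearMap.congr_fun f.comm_b1 x

lemma Q0Hom.comm_b2_apply {M N : Q0Rep k} (f : Q0Hom M N) (x : M.V2) :
    f.fy (M.mb2 x) = N.mb2 (f.f2 x) := LinearMap.congr_fun f.comm_b2 x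

lemma Q0Hom.comm_b3_apply {M N : Q0Rep k} (f : Q0Hom M N) (x : M.V3) :
    f.fy (M.mb3 x) = N.mb3 (f.f3 x) := LinearMap.congr_fun f.comm_b3 x

/-- Identity morphism. -/

def Q0Hom.idHom (M : Q0Rep k) : Q0Hom M M :=
  ⟨LinearMap.id, LinearMap.id, LinearMap.id, LinearMap.id, LinearMap.id,
    by simp, by simp, by simp, by simp, by simp, by simp⟩

/-- Composition of morphisms. -/
def Q0Hom.comp {L M N : Q0Rep k} (g : Q0Hom M N) (f : Q0Hom L M) : Q0Hom L N where
  fx := g.fx ∘ₗ f.fx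
  f1 := g.f1 ∘ₗ f.f1
  f2 := g.f2 ∘ₗ f.f2
  f3 := g.f3 ∘ₗ f.f3
  fy := g.fy ∘ₗ f.fy
  comm_a1 := by
    ext x
    simp [Q0Hom.comm_a1_apply]
  comm_a2 := by
    ext x
    simp [Q0Hom.comm_a2_apply]
  comm_a3 := by
    ext x
    simp [Q0Hom.comm_a3_apply]
  comm_b1 := by
    ext x
    simp [Q0Hom.comm_b1_apply]
  comm_b2 := by
    ext x
    simp [Q0Hom.comm_b2_apply]
  comm_b3 := by
    ext x
    simp [Q0Hom.comm_b3_apply]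

/-- Zero morphism. -/
def Q0Hom.zeroHom (M N : Q0Rep k) : Q0Hom M N :=
  ⟨0, 0, 0, 0, 0, by simp, by simp, by simp, by simp, by simp, by simp⟩

/-- Sum of morphisms. -/
def Q0Hom.add {M N : Q0Rep k} (f g : Q0Hom M N) : Q0Hom M N :=
  ⟨f.fx + g.fx, f.f1 + g.f1, f.f2 + g.f2, f.f3 + g.f3, f.fy + g.fy,
    by simp [LinearMap.add_comp, LinearMap.comp_add, f.comm_a1, g.comm_a1],
    by simp [LinearMap.add_comp, LinearMap.comp_add, f.comm_a2, g.comm_a2],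
    by simp [LinearMap.add_comp, LinearMap.comp_add, f.comm_a3, g.comm_a3],
    by simp [LinearMap.add_comp, LinearMap.comp_add, f.comm_b1, g.comm_b1],
    by simp [LinearMap.add_comp, LinearMap.comp_add, f.comm_b2, g.comm_b2],
    by simp [LinearMap.add_comp, LinearMap.comp_add, f.comm_b3, g.comm_b3]⟩

/-- Scalar multiples of the identity. -/
def Q0Hom.smulId (M : Q0Rep k) (r : k) : Q0Hom M M :=
  ⟨r • LinearMap.id, r • LinearMap.id, r • LinearMap.id, r • LinearMap.id, r • LinearMap.id,
    by ext x; simp, by ext x; simp, by ext x; simp,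
    by ext x; simp, by ext x; simp, by ext x; simp⟩

/-- The endomorphism of the total space induced by an endomorphism of a
representation. -/
def Q0Hom.prodEnd {M : Q0Rep k} (g : Q0Hom M M) :
    Module.End k ((((M.Vx × M.V1) × M.V2) × M.V3) × M.Vy) :=
  (((g.fx.prodMap g.f1).prodMap g.f2).prodMap g.f3).prodMap g.fy

/-- The endomorphism algebra `End(M)`, realized as a subalgebra of the
endomorphisms of the total space. -/
def Q0End (M : Q0Rep k) :
    Subalgebra k (Module.End k ((((M.Vx × M.V1) × M.V2) × M.V3) × M.Vy)) where
  carrier := {F | ∃ g : Q0Hom M M, F = g.prodEnd}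
  zero_mem' := ⟨Q0Hom.zeroHom M M, LinearMap.ext fun _ => rfl⟩
  one_mem' := ⟨Q0Hom.idHom M, LinearMap.ext fun _ => rfl⟩
  add_mem' := by
    rintro a b ⟨g, rfl⟩ ⟨h, rfl⟩
    exact ⟨g.add h, LinearMap.ext fun _ => rfl⟩
  mul_mem' := by
    rintro a b ⟨g, rfl⟩ ⟨h, rfl⟩
    exact ⟨g.comp h, LinearMap.ext fun _ => rfl⟩
  algebraMap_mem' := fun r =>
    ⟨Q0Hom.smulId M r, LinearMap.ext fun x => by
      simp [Module.algebraMap_end_apply, Q0Hom.prodEnd, Q0Hom.smulId]⟩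

variable (k)

/-- The `n×n` Jordan block with eigenvalue `lam`, as a linear endomorphism of `kⁿ`. -/
def jordan (n : ℕ) (lam : k) : (Fin n → k) →ₗ[k] (Fin n → k) :=
  Matrix.mulVecLin (Matrix.of fun i j : Fin n =>
    if i = j then lam else if (i : ℕ) + 1 = (j : ℕ) then 1 else 0)

/-- The representation `R_n(λ)` of `Q⁰`: all spaces `kⁿ`, `m_{a₁}=m_{a₂}=m_{a₃}=id`,
`m_{b₁}=id`, `m_{b₂}=−id−J_n(λ)`, `m_{b₃}=J_n(λ)`. -/
def Rlam (n : ℕ) (lam : k) : Q0Rep k where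
  Vx := Fin n → k
  V1 := Fin n → k
  V2 := Fin n → k
  V3 := Fin n → k
  Vy := Fin n → k
  ma1 := LinearMap.id
  ma2 := LinearMap.id
  ma3 := LinearMap.id
  mb1 := LinearMap.id
  mb2 := -LinearMap.id - jordan k n lam
  mb3 := jordan k n lam


section AuxLemmas

variable {k : Type} [Field k]

def Nsh (k : Type) [Field k] (n : ℕ) : Module.End k (Fin n → k) where
  toFun v i := if h : (i:ℕ)+1 < n then v ⟨(i:ℕ)+1, h⟩ else 0
  map_add' u v := by funext i; by_cases h : (i:ℕ)+1 < n <;> simp [h]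
  map_smul' c v := by funext i; by_cases h : (i:ℕ)+1 < n <;> simp [h]

lemma Nsh_apply (n : ℕ) (v : Fin n → k) (i : Fin n) :
    Nsh k n v i = if h : (i:ℕ)+1 < n then v ⟨(i:ℕ)+1, h⟩ else 0 := rfl

lemma jordan_eq (n : ℕ) (lam : k) :
    jordan k n lam = lam • (1 : Module.End k (Fin n → k)) + Nsh k n := by
  apply LinearMap.ext; intro v; funext i
  show Matrix.mulVec _ v i = _
  rw [Matrix.mulVec, dotProduct]
  by_cases h : (i:ℕ)+1 < n
  · have key : ∀ j : Fin n, (Matrix.of fun i j : Fin n =>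
        if i = j then lam else if (i : ℕ) + 1 = (j : ℕ) then 1 else 0) i j * v j
        = (if i = j then lam * v j else 0) + (if (⟨(i:ℕ)+1, h⟩ : Fin n) = j then v j else 0) := by
      intro j
      rcases eq_or_ne i j with rfl | hij
      · have h2 : ¬ ((⟨(i:ℕ)+1, h⟩ : Fin n) = i) := by simp [Fin.ext_iff]
        simp [Matrix.of_apply, h2]
      · simp only [Matrix.of_apply, if_neg hij]
        by_cases h2 : (⟨(i:ℕ)+1, h⟩ : Fin n) = j
        · rw [if_pos, if_pos h2, one_mul, zero_add]
          exact (Fin.ext_iff.mp h2)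
        · rw [if_neg, if_neg h2, zero_mul, zero_add]
          intro hc; exact h2 (Fin.ext hc)
    rw [Finset.sum_congr rfl fun j _ => key j, Finset.sum_add_distrib,
      Finset.sum_ite_eq Finset.univ i (fun j => lam * v j),
      Finset.sum_ite_eq Finset.univ (⟨(i:ℕ)+1, h⟩ : Fin n) v]
    simp only [Finset.mem_univ, if_true, LinearMap.add_apply, LinearMap.smul_apply,
      Module.End.one_apply, Pi.add_apply, Pi.smul_apply, smul_eq_mul, Nsh_apply, dif_pos h]
  · have key : ∀ j : Fin n, (Matrix.of fun i j : Fin n =>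
        if i = j then lam else if (i : ℕ) + 1 = (j : ℕ) then 1 else 0) i j * v j
        = (if i = j then lam * v j else 0) := by
      intro j
      rcases eq_or_ne i j with rfl | hij
      · simp
      · have : ¬ ((i:ℕ)+1 = (j:ℕ)) := by omega
        simp [Matrix.of_apply, hij, this]
    rw [Finset.sum_congr rfl fun j _ => key j,
      Finset.sum_ite_eq Finset.univ i (fun j => lam * v j)]
    simp only [Finset.mem_univ, if_true, LinearMap.add_apply, LinearMap.smul_apply,
      Module.End.one_apply, Pi.add_apply, Pi.smul_apply, smul_eq_mul, Nsh_apply, dif_neg h,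
      add_zero]

lemma Nsh_pow_apply (n j : ℕ) (v : Fin n → k) (i : Fin n) :
    ((Nsh k n)^j) v i = if h : (i:ℕ)+j < n then v ⟨(i:ℕ)+j, h⟩ else 0 := by
  induction j generalizing v i with
  | zero => simp [i.isLt]
  | succ j ih =>
    rw [pow_succ]
    show ((Nsh k n)^j) (Nsh k n v) i = _
    rw [ih]
    by_cases h : (i:ℕ)+j < n
    · rw [dif_pos h, Nsh_apply]
      by_cases h2 : (i:ℕ)+j+1 < n
      · rw [dif_pos h2, dif_pos (by omega : (i:ℕ)+(j+1) < n)]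
        congr 1
      · rw [dif_neg h2, dif_neg (by omega : ¬ ((i:ℕ)+(j+1) < n))]
    · rw [dif_neg h, dif_neg (by omega : ¬ ((i:ℕ)+(j+1) < n))]

lemma Nsh_pow_n (n : ℕ) : (Nsh k n)^n = 0 := by
  apply LinearMap.ext; intro v; funext i
  rw [show ((Nsh k n)^n) v i = _ from Nsh_pow_apply n n v i, dif_neg (by omega)]
  rfl

lemma Nsh_ker (n : ℕ) (hn : 0 < n) (v : Fin n → k) (hv : Nsh k n v = 0) :
    v = v ⟨0, hn⟩ • (Pi.single (⟨0, hn⟩ : Fin n) 1 : Fin n → k) := by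
  funext i
  rcases eq_or_ne i ⟨0, hn⟩ with rfl | hi
  · simp
  · have hiv : (i:ℕ) ≠ 0 := fun h => hi (Fin.ext h)
    have h1 : (i:ℕ) - 1 + 1 < n := by omega
    have h0 := congrFun hv ⟨(i:ℕ)-1, by omega⟩
    rw [Nsh_apply] at h0
    rw [dif_pos h1] at h0
    have h2 : (⟨(i:ℕ)-1+1, h1⟩ : Fin n) = i := Fin.ext (by simp; omega)
    rw [h2] at h0
    rw [Pi.smul_apply, Pi.single_eq_of_ne hi, smul_zero]
    exact h0

lemma Nsh_apex (n : ℕ) (hn : 0 < n) (v : Fin n → k) :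
    ((Nsh k n)^(n-1)) v = v ⟨n-1, by omega⟩ • (Pi.single (⟨0, hn⟩ : Fin n) 1 : Fin n → k) := by
  funext i
  rw [Nsh_pow_apply]
  rcases eq_or_ne i ⟨0, hn⟩ with rfl | hi
  · rw [dif_pos (by simp; omega)]
    rw [Pi.smul_apply, Pi.single_eq_same, smul_eq_mul, mul_one]
    congr 1
    exact Fin.ext (by simp)
  · have hiv : (i:ℕ) ≠ 0 := fun h => hi (Fin.ext h)
    rw [dif_neg (by omega), Pi.smul_apply, Pi.single_eq_of_ne hi, smul_zero]

lemma dichotomy (n : ℕ) (hn : 0 < n) (f : Module.End k (Fin n → k))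
    (hf : f * Nsh k n = Nsh k n * f) : IsUnit f ∨ f^n = 0 := by
  classical
  set N := Nsh k n with hN
  have hc : Commute f N := hf
  set z0 : Fin n := ⟨0, hn⟩ with hz0
  set zl : Fin n := ⟨n-1, by omega⟩ with hzl
  set e0 : Fin n → k := Pi.single z0 1 with he0
  set el : Fin n → k := Pi.single zl 1 with hel
  set c : k := f el zl with hcdef
  have he0el : (N^(n-1)) el = e0 := by
    rw [Nsh_apex n hn el, hel]
    rw [Pi.single_eq_same, one_smul]
  have hfe0 : f e0 = c • e0 := by
    rw [← he0el]
    have : f ((N^(n-1)) el) = (N^(n-1)) (f el) := by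
      have := congrFun (congrArg DFunLike.coe (hc.pow_right (n-1))) el
      exact this
    rw [this, Nsh_apex n hn (f el), he0el]
  have K : ∀ v : Fin n → k, N v = 0 → f v = (v z0 * c) • e0 := by
    intro v hv
    have hv' : v = v z0 • e0 := Nsh_ker n hn v hv
    calc f v = f (v z0 • e0) := by rw [← hv']
    _ = v z0 • f e0 := map_smul f _ _
    _ = (v z0 * c) • e0 := by rw [hfe0, smul_smul]
  have he0ne : e0 ≠ 0 := by
    intro h
    have := congrFun h z0
    rw [he0, Pi.single_eq_same] at this
    exact one_ne_zero this
  by_cases hc0 : c = 0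
  · right
    have claim : ∀ j : ℕ, ∀ v : Fin n → k, (N^j) v = 0 → (f^j) v = 0 := by
      intro j
      induction j with
      | zero => intro v hv; simpa using hv
      | succ j ih =>
        intro v hv
        have h1 : N ((N^j) v) = 0 := by
          have : (N^(j+1)) v = N ((N^j) v) := by rw [pow_succ']; rfl
          rw [← this, hv]
        have h2 : (N^j) (f v) = 0 := by
          have hcj := congrFun (congrArg DFunLike.coe (hc.pow_right j)) v
          have : (N^j) (f v) = f ((N^j) v) := hcj.symm
          rw [this, K _ h1, hc0, mul_zero, zero_smul]
        have : (f^(j+1)) v = (f^j) (f v) := by rw [pow_succ]; rfl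
        rw [this, ih _ h2]
    apply LinearMap.ext; intro v
    have : (N^n) v = 0 := by rw [Nsh_pow_n]; rfl
    exact claim n v this
  · left
    have hinj : Function.Injective f := by
      rw [← LinearMap.ker_eq_bot, LinearMap.ker_eq_bot']
      intro v hv
      by_contra hv0
      have hex : ∃ j, (N^j) v = 0 := ⟨n, by rw [Nsh_pow_n]; rfl⟩
      set m := Nat.find hex with hm
      have hm0 : m ≠ 0 := by
        intro h
        have := Nat.find_spec hex
        rw [← hm, h] at this
        simp at this
        exact hv0 this
      set w : Fin n → k := (N^(m-1)) v with hw
      have hwne : w ≠ 0 := Nat.find_min hex (by omega)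
      have hNw : N w = 0 := by
        have : (N^m) v = N ((N^(m-1)) v) := by
          conv_lhs => rw [show m = (m-1)+1 by omega]
          rw [pow_succ']; rfl
        rw [← hw] at this
        rw [← this]
        exact Nat.find_spec hex
      have hfw : f w = 0 := by
        have hcj := congrFun (congrArg DFunLike.coe (hc.pow_right (m-1))) v
        have : f w = (N^(m-1)) (f v) := hcj
        rw [this, hv, map_zero]
      have := K w hNw
      rw [hfw] at this
      have h0 : w z0 * c = 0 := by
        rcases smul_eq_zero.mp this.symm with h | h
        · exact h
        · exact absurd h he0ne
      have hwz0 : w z0 = 0 := by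
        rcases mul_eq_zero.mp h0 with h | h
        · exact h
        · exact absurd h hc0
      have : w = 0 := by
        rw [Nsh_ker n hn w hNw, hwz0, zero_smul]
      exact hwne this
    exact Module.End.isUnit_iff f |>.mpr
      ⟨hinj, (LinearMap.injective_iff_surjective).mp hinj⟩


lemma endo_eq {n : ℕ} {lam : k} (g : Q0Hom (Rlam k n lam) (Rlam k n lam)) :
    ∃ f : (Fin n → k) →ₗ[k] (Fin n → k),
      g.fx = f ∧ g.f1 = f ∧ g.f2 = f ∧ g.f3 = f ∧ g.fy = f ∧
      f ∘ₗ jordan k n lam = jordan k n lam ∘ₗ f := by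
  have h1 : g.f1 = g.fx := by
    have h := g.comm_a1
    simp only [Rlam, LinearMap.comp_id, LinearMap.id_comp] at h
    exact h
  have h2 : g.f2 = g.fx := by
    have h := g.comm_a2
    simp only [Rlam, LinearMap.comp_id, LinearMap.id_comp] at h
    exact h
  have h3 : g.f3 = g.fx := by
    have h := g.comm_a3
    simp only [Rlam, LinearMap.comp_id, LinearMap.id_comp] at h
    exact h
  have hy : g.fy = g.fx := by
    have h := g.comm_b1
    simp only [Rlam, LinearMap.comp_id, LinearMap.id_comp] at h
    exact (show g.fy = g.f1 from h).trans h1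
  have hj : g.fx ∘ₗ jordan k n lam = jordan k n lam ∘ₗ g.fx := by
    have h := g.comm_b3
    simp only [Rlam] at h
    rw [hy, h3] at h
    exact h
  exact ⟨g.fx, rfl, h1, h2, h3, hy, hj⟩

/-- The diagonal endomorphism of `Rlam` determined by one map commuting with `J`. -/
def diagHom (n : ℕ) (lam : k) (f : (Fin n → k) →ₗ[k] (Fin n → k))
    (hf : f ∘ₗ jordan k n lam = jordan k n lam ∘ₗ f) :
    Q0Hom (Rlam k n lam) (Rlam k n lam) where
  fx := f
  f1 := f
  f2 := f
  f3 := f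
  fy := f
  comm_a1 := by show f ∘ₗ LinearMap.id = LinearMap.id ∘ₗ f; simp
  comm_a2 := by show f ∘ₗ LinearMap.id = LinearMap.id ∘ₗ f; simp
  comm_a3 := by show f ∘ₗ LinearMap.id = LinearMap.id ∘ₗ f; simp
  comm_b1 := by show f ∘ₗ LinearMap.id = LinearMap.id ∘ₗ f; simp
  comm_b2 := by
    show f ∘ₗ (-LinearMap.id - jordan k n lam) = (-LinearMap.id - jordan k n lam) ∘ₗ f
    rw [LinearMap.comp_sub, LinearMap.sub_comp, hf]
    congr 1
    ext v
    simp
  comm_b3 := hf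

lemma isUnit_diag (n : ℕ) (lam : k) (f : (Fin n → k) →ₗ[k] (Fin n → k))
    (hf : f ∘ₗ jordan k n lam = jordan k n lam ∘ₗ f)
    (hu : IsUnit (f : Module.End k (Fin n → k)))
    (a : Q0End (Rlam k n lam))
    (ha : a.val = (diagHom n lam f hf).prodEnd) :
    IsUnit a := by
  have hcJ : Commute (f : Module.End k (Fin n → k)) (jordan k n lam) := hf
  have hcu : Commute ((hu.unit : (Module.End k (Fin n → k))ˣ) : Module.End k (Fin n → k))
      (jordan k n lam) := by
    rw [IsUnit.unit_spec]; exact hcJ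
  have hcJ' := hcu.units_inv_left
  set f' : Module.End k (Fin n → k) := ↑hu.unit⁻¹ with hf'def
  have hf'J : f' ∘ₗ jordan k n lam = jordan k n lam ∘ₗ f' := hcJ'
  have hff' : f ∘ₗ f' = LinearMap.id := by
    have h := hu.unit.mul_inv
    rw [IsUnit.unit_spec] at h
    exact h
  have hf'f : f' ∘ₗ f = LinearMap.id := by
    have h := hu.unit.inv_mul
    rw [IsUnit.unit_spec] at h
    exact h
  refine ⟨⟨a, ⟨(diagHom n lam f' hf'J).prodEnd, ⟨diagHom n lam f' hf'J, rfl⟩⟩, ?_, ?_⟩, rfl⟩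
  · apply Subtype.ext
    show a.val * (diagHom n lam f' hf'J).prodEnd = 1
    rw [ha]
    apply LinearMap.ext; intro p
    obtain ⟨⟨⟨⟨px, p1⟩, p2⟩, p3⟩, py⟩ := p
    have e : ∀ x : Fin n → k, f (f' x) = x := fun x => LinearMap.congr_fun hff' x
    show ((((f (f' px), f (f' p1)), f (f' p2)), f (f' p3)), f (f' py)) = _
    exact Prod.ext (Prod.ext (Prod.ext (Prod.ext (e px) (e p1)) (e p2)) (e p3)) (e py)
  · apply Subtype.ext
    show (diagHom n lam f' hf'J).prodEnd * a.val = 1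
    rw [ha]
    apply LinearMap.ext; intro p
    obtain ⟨⟨⟨⟨px, p1⟩, p2⟩, p3⟩, py⟩ := p
    have e : ∀ x : Fin n → k, f' (f x) = x := fun x => LinearMap.congr_fun hf'f x
    show ((((f' (f px), f' (f p1)), f' (f p2)), f' (f p3)), f' (f py)) = _
    exact Prod.ext (Prod.ext (Prod.ext (Prod.ext (e px) (e p1)) (e p2)) (e p3)) (e py)

lemma commute_nsh_of_commute_jordan (n : ℕ) (lam : k)
    (f : Module.End k (Fin n → k))
    (hj : f ∘ₗ jordan k n lam = jordan k n lam ∘ₗ f) :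
    f * Nsh k n = Nsh k n * f := by
  have hcJ : Commute f (jordan k n lam) := hj
  have hNJ : Nsh k n = jordan k n lam - lam • 1 := by
    rw [jordan_eq]; abel
  rw [hNJ]
  exact hcJ.sub_right ((Commute.one_right _).smul_right lam)

lemma q0end_local (n : ℕ) (hn : 0 < n) (lam : k) :
    IsLocalRing (Q0End (Rlam k n lam)) := by
  haveI hnt : Nontrivial (Q0End (Rlam k n lam)) := by
    refine ⟨0, 1, fun h => ?_⟩
    have h1 := congrArg Subtype.val h
    have h2 := LinearMap.congr_fun h1
      (((((Pi.single (⟨0, hn⟩ : Fin n) (1:k) : Fin n → k), (0 : Fin n → k)),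
        (0 : Fin n → k)), (0 : Fin n → k)), (0 : Fin n → k))
    have h3 := congrArg (fun q => q.1.1.1.1 (⟨0, hn⟩ : Fin n)) h2
    simp [Pi.single_eq_same] at h3
    exact one_ne_zero (h3.symm.trans (Pi.zero_apply _))
  refine ⟨fun {a b} hab => ?_⟩
  obtain ⟨g, hg⟩ := a.2
  obtain ⟨f, hfx, h1, h2, h3, hy, hj⟩ := endo_eq g
  have ha : a.val = (diagHom n lam f hj).prodEnd := by
    rw [hg]
    simp only [Q0Hom.prodEnd, diagHom, hfx, h1, h2, h3, hy]
  rcases dichotomy n hn f (commute_nsh_of_commute_jordan n lam f hj) with hu | hnil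
  · exact Or.inl (isUnit_diag n lam f hj hu a ha)
  · right
    have hnl : IsNilpotent (f : Module.End k (Fin n → k)) := ⟨n, hnil⟩
    have hu : IsUnit ((1 : Module.End k (Fin n → k)) - f) := hnl.isUnit_one_sub
    have hj' : ((1 : Module.End k (Fin n → k)) - f) ∘ₗ jordan k n lam
        = jordan k n lam ∘ₗ ((1 : Module.End k (Fin n → k)) - f) :=
      (Commute.one_left (jordan k n lam)).sub_left (hj : Commute _ _)
    apply isUnit_diag n lam (1 - f) hj' hu b
    have hval : b.val = 1 - a.val := by
      have h' : a.val + b.val = 1 := congrArg Subtype.val hab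
      exact eq_sub_of_add_eq' h'
    rw [hval, ha]
    apply LinearMap.ext; intro p
    rw [LinearMap.sub_apply]
    rfl

lemma symm_comm {A B C D : Type} [AddCommGroup A] [AddCommGroup B] [AddCommGroup C]
    [AddCommGroup D] [Module k A] [Module k B] [Module k C] [Module k D]
    (p : A →ₗ[k] B) (q : C →ₗ[k] D) (fac : A →ₗ[k] C) (fbd : B →ₗ[k] D)
    (hac : Function.Bijective fac) (hbd : Function.Bijective fbd)
    (hcomm : fbd ∘ₗ p = q ∘ₗ fac) :
    ((LinearEquiv.ofBijective fbd hbd).symm : D →ₗ[k] B) ∘ₗ q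
      = p ∘ₗ ((LinearEquiv.ofBijective fac hac).symm : C →ₗ[k] A) := by
  set EA := LinearEquiv.ofBijective fac hac
  set EB := LinearEquiv.ofBijective fbd hbd
  apply LinearMap.ext; intro v
  apply EB.injective
  show fbd ((EB.symm : D →ₗ[k] B) (q v)) = fbd (p ((EA.symm : C →ₗ[k] A) v))
  have e1 : fbd (EB.symm (q v)) = q v := EB.apply_symm_apply (q v)
  have e2 : fbd (p (EA.symm v)) = q (fac (EA.symm v)) := LinearMap.congr_fun hcomm _
  have e3 : fac (EA.symm v) = v := EA.apply_symm_apply v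
  simp only [LinearEquiv.coe_coe]
  rw [e1, e2, e3]

/-- Inverse of an isomorphism of representations. -/
noncomputable def invHom {M N : Q0Rep k} (f : Q0Hom M N)
    (hx : Function.Bijective f.fx) (h1 : Function.Bijective f.f1)
    (h2 : Function.Bijective f.f2) (h3 : Function.Bijective f.f3)
    (hy : Function.Bijective f.fy) : Q0Hom N M where
  fx := ((LinearEquiv.ofBijective f.fx hx).symm : N.Vx →ₗ[k] M.Vx)
  f1 := ((LinearEquiv.ofBijective f.f1 h1).symm : N.V1 →ₗ[k] M.V1)
  f2 := ((LinearEquiv.ofBijective f.f2 h2).symm : N.V2 →ₗ[k] M.V2)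
  f3 := ((LinearEquiv.ofBijective f.f3 h3).symm : N.V3 →ₗ[k] M.V3)
  fy := ((LinearEquiv.ofBijective f.fy hy).symm : N.Vy →ₗ[k] M.Vy)
  comm_a1 := symm_comm M.ma1 N.ma1 f.fx f.f1 hx h1 f.comm_a1
  comm_a2 := symm_comm M.ma2 N.ma2 f.fx f.f2 hx h2 f.comm_a2
  comm_a3 := symm_comm M.ma3 N.ma3 f.fx f.f3 hx h3 f.comm_a3
  comm_b1 := symm_comm M.mb1 N.mb1 f.f1 f.fy h1 hy f.comm_b1
  comm_b2 := symm_comm M.mb2 N.mb2 f.f2 f.fy h2 hy f.comm_b2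
  comm_b3 := symm_comm M.mb3 N.mb3 f.f3 f.fy h3 hy f.comm_b3

/-- The projection onto the first summand, as an endomorphism of the direct sum. -/
def pihom (A B : Q0Rep k) : Q0Hom (A.dsum B) (A.dsum B) where
  fx := LinearMap.prodMap LinearMap.id 0
  f1 := LinearMap.prodMap LinearMap.id 0
  f2 := LinearMap.prodMap LinearMap.id 0
  f3 := LinearMap.prodMap LinearMap.id 0
  fy := LinearMap.prodMap LinearMap.id 0
  comm_a1 := by apply LinearMap.ext; rintro ⟨a, b⟩; show (_, (0:_)) = _; exact Prod.ext rfl (map_zero B.ma1).symm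
  comm_a2 := by apply LinearMap.ext; rintro ⟨a, b⟩; show (_, (0:_)) = _; exact Prod.ext rfl (map_zero B.ma2).symm
  comm_a3 := by apply LinearMap.ext; rintro ⟨a, b⟩; show (_, (0:_)) = _; exact Prod.ext rfl (map_zero B.ma3).symm
  comm_b1 := by apply LinearMap.ext; rintro ⟨a, b⟩; show (_, (0:_)) = _; exact Prod.ext rfl (map_zero B.mb1).symm
  comm_b2 := by apply LinearMap.ext; rintro ⟨a, b⟩; show (_, (0:_)) = _; exact Prod.ext rfl (map_zero B.mb2).symm
  comm_b3 := by apply LinearMap.ext; rintro ⟨a, b⟩; show (_, (0:_)) = _; exact Prod.ext rfl (map_zero B.mb3).symm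

lemma vertex_zero_left {VA VB W : Type} [AddCommGroup VA] [AddCommGroup VB] [AddCommGroup W]
    [Module k VA] [Module k VB] [Module k W] (F : W →ₗ[k] VA × VB)
    (hsurj : Function.Surjective F)
    (h : LinearMap.prodMap (LinearMap.id : VA →ₗ[k] VA) (0 : VB →ₗ[k] VB) ∘ₗ F = 0) :
    Subsingleton VA := by
  apply subsingleton_of_forall_eq (0 : VA)
  intro a
  obtain ⟨m, hm⟩ := hsurj (a, 0)
  have h2 := LinearMap.congr_fun h m
  rw [LinearMap.comp_apply, hm] at h2
  have h3 : ((a, 0) : VA × VB) = 0 := h2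
  exact congrArg Prod.fst h3

lemma vertex_zero_right {VA VB W : Type} [AddCommGroup VA] [AddCommGroup VB] [AddCommGroup W]
    [Module k VA] [Module k VB] [Module k W] (F : W →ₗ[k] VA × VB)
    (hsurj : Function.Surjective F)
    (h : LinearMap.prodMap (LinearMap.id : VA →ₗ[k] VA) (0 : VB →ₗ[k] VB) ∘ₗ F = F) :
    Subsingleton VB := by
  apply subsingleton_of_forall_eq (0 : VB)
  intro b
  obtain ⟨m, hm⟩ := hsurj (0, b)
  have h2 := LinearMap.congr_fun h m
  rw [LinearMap.comp_apply, hm] at h2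
  have : ((0, 0) : VA × VB) = (0, b) := h2
  exact (congrArg Prod.snd this).symm

lemma rlam_indec (n : ℕ) (hn : 0 < n) (lam : k) : (Rlam k n lam).Indecomposable := by
  constructor
  · rintro ⟨hx, -, -, -, -⟩
    have h0 : (Pi.single (⟨0, hn⟩ : Fin n) (1:k) : Fin n → k) = 0 := @Subsingleton.elim _ hx _ _
    have h1 := congrFun h0 ⟨0, hn⟩
    rw [Pi.single_eq_same] at h1
    exact one_ne_zero (h1.trans rfl)
  · rintro A B ⟨f, hbx, hb1, hb2, hb3, hby⟩
    set finv := invHom f hbx hb1 hb2 hb3 hby with hfinv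
    set e : Q0Hom (Rlam k n lam) (Rlam k n lam) := finv.comp ((pihom A B).comp f) with he
    obtain ⟨p, hpx, hp1, hp2, hp3, hpy, hpj⟩ := endo_eq e
    have hfex : ∀ v, f.fx (e.fx v)
        = (LinearMap.prodMap LinearMap.id 0 : (A.dsum B).Vx →ₗ[k] (A.dsum B).Vx) (f.fx v) :=
      fun v => (LinearEquiv.ofBijective f.fx hbx).apply_symm_apply _
    have hfe1 : ∀ v, f.f1 (e.f1 v)
        = (LinearMap.prodMap LinearMap.id 0 : (A.dsum B).V1 →ₗ[k] (A.dsum B).V1) (f.f1 v) :=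
      fun v => (LinearEquiv.ofBijective f.f1 hb1).apply_symm_apply _
    have hfe2 : ∀ v, f.f2 (e.f2 v)
        = (LinearMap.prodMap LinearMap.id 0 : (A.dsum B).V2 →ₗ[k] (A.dsum B).V2) (f.f2 v) :=
      fun v => (LinearEquiv.ofBijective f.f2 hb2).apply_symm_apply _
    have hfe3 : ∀ v, f.f3 (e.f3 v)
        = (LinearMap.prodMap LinearMap.id 0 : (A.dsum B).V3 →ₗ[k] (A.dsum B).V3) (f.f3 v) :=
      fun v => (LinearEquiv.ofBijective f.f3 hb3).apply_symm_apply _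
    have hfey : ∀ v, f.fy (e.fy v)
        = (LinearMap.prodMap LinearMap.id 0 : (A.dsum B).Vy →ₗ[k] (A.dsum B).Vy) (f.fy v) :=
      fun v => (LinearEquiv.ofBijective f.fy hby).apply_symm_apply _
    have hppv : ∀ v, e.fx (e.fx v) = e.fx v := by
      intro v
      apply hbx.injective
      exact (hfex _).trans ((congrArg (LinearMap.prodMap LinearMap.id 0 : (A.dsum B).Vx →ₗ[k] (A.dsum B).Vx) (hfex v)).trans
        ((rfl : (LinearMap.prodMap LinearMap.id 0 : (A.dsum B).Vx →ₗ[k] (A.dsum B).Vx) ((LinearMap.prodMap LinearMap.id 0 : (A.dsum B).Vx →ₗ[k] (A.dsum B).Vx) (f.fx v)) = (LinearMap.prodMap LinearMap.id 0 : (A.dsum B).Vx →ₗ[k] (A.dsum B).Vx) (f.fx v)).trans (hfex v).symm))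
    have hpp : ∀ v, p (p v) = p v := by
      intro v
      have h := hppv v
      rw [hpx] at h
      exact h
    rcases dichotomy n hn p (commute_nsh_of_commute_jordan n lam p hpj) with hu | hnil
    · -- p is the identity, B is zero
      right
      have hinj : Function.Injective p := ((Module.End.isUnit_iff p).mp hu).injective
      have hpid : ∀ v, p v = v := fun v => hinj (hpp v)
      refine ⟨?_, ?_, ?_, ?_, ?_⟩
      · exact vertex_zero_right f.fx hbx.surjective (by
          apply LinearMap.ext; intro w
          have h1 : e.fx w = w := by rw [hpx]; exact hpid w
          have h2 := hfex w
          rw [h1] at h2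
          exact h2.symm)
      · exact vertex_zero_right f.f1 hb1.surjective (by
          apply LinearMap.ext; intro w
          have h1 : e.f1 w = w := by rw [hp1]; exact hpid w
          have h2 := hfe1 w
          rw [h1] at h2
          exact h2.symm)
      · exact vertex_zero_right f.f2 hb2.surjective (by
          apply LinearMap.ext; intro w
          have h1 : e.f2 w = w := by rw [hp2]; exact hpid w
          have h2 := hfe2 w
          rw [h1] at h2
          exact h2.symm)
      · exact vertex_zero_right f.f3 hb3.surjective (by
          apply LinearMap.ext; intro w
          have h1 : e.f3 w = w := by rw [hp3]; exact hpid w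
          have h2 := hfe3 w
          rw [h1] at h2
          exact h2.symm)
      · exact vertex_zero_right f.fy hby.surjective (by
          apply LinearMap.ext; intro w
          have h1 : e.fy w = w := by rw [hpy]; exact hpid w
          have h2 := hfey w
          rw [h1] at h2
          exact h2.symm)
    · -- p = 0, A is zero
      left
      have hpow : ∀ j, ∀ v, (p^(j+1)) v = p v := by
        intro j
        induction j with
        | zero => intro v; rw [pow_one]
        | succ j ih =>
          intro v
          rw [pow_succ]
          show (p^(j+1)) (p v) = p v
          rw [ih (p v), hpp v]
      have hp0 : ∀ v, p v = 0 := by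
        intro v
        have h := hpow (n-1) v
        rw [show n-1+1 = n by omega, hnil, LinearMap.zero_apply] at h
        exact h.symm
      refine ⟨?_, ?_, ?_, ?_, ?_⟩
      · exact vertex_zero_left f.fx hbx.surjective (by
          apply LinearMap.ext; intro w
          have h1 : e.fx w = 0 := by rw [hpx]; exact hp0 w
          have h2 := hfex w
          rw [h1, map_zero] at h2
          exact h2.symm)
      · exact vertex_zero_left f.f1 hb1.surjective (by
          apply LinearMap.ext; intro w
          have h1 : e.f1 w = 0 := by rw [hp1]; exact hp0 w
          have h2 := hfe1 w
          rw [h1, map_zero] at h2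
          exact h2.symm)
      · exact vertex_zero_left f.f2 hb2.surjective (by
          apply LinearMap.ext; intro w
          have h1 : e.f2 w = 0 := by rw [hp2]; exact hp0 w
          have h2 := hfe2 w
          rw [h1, map_zero] at h2
          exact h2.symm)
      · exact vertex_zero_left f.f3 hb3.surjective (by
          apply LinearMap.ext; intro w
          have h1 : e.f3 w = 0 := by rw [hp3]; exact hp0 w
          have h2 := hfe3 w
          rw [h1, map_zero] at h2
          exact h2.symm)
      · exact vertex_zero_left f.fy hby.surjective (by
          apply LinearMap.ext; intro w
          have h1 : e.fy w = 0 := by rw [hpy]; exact hp0 w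
          have h2 := hfey w
          rw [h1, map_zero] at h2
          exact h2.symm)

lemma rlam_iso_iff (n : ℕ) (hn : 0 < n) (lam : k) (m : ℕ) (hm : 0 < m) (mu : k) :
    Q0Iso (Rlam k n lam) (Rlam k m mu) ↔ n = m ∧ lam = mu := by
  constructor
  · rintro ⟨f, hbx, hb1, hb2, hb3, hby⟩
    have Ex : (Fin n → k) ≃ₗ[k] (Fin m → k) := LinearEquiv.ofBijective f.fx hbx
    have hnm : n = m := by
      have h1 := Ex.finrank_eq
      rwa [Module.finrank_fin_fun, Module.finrank_fin_fun] at h1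
    subst hnm
    refine ⟨rfl, ?_⟩
    have h1 : f.f1 = f.fx := by
      have h := f.comm_a1
      simp only [Rlam, LinearMap.comp_id, LinearMap.id_comp] at h
      exact h
    have h3 : f.f3 = f.fx := by
      have h := f.comm_a3
      simp only [Rlam, LinearMap.comp_id, LinearMap.id_comp] at h
      exact h
    have hy : f.fy = f.fx := by
      have h := f.comm_b1
      simp only [Rlam, LinearMap.comp_id, LinearMap.id_comp] at h
      exact (show f.fy = f.f1 from h).trans h1
    have hj : (f.fx : Module.End k (Fin n → k)) ∘ₗ jordan k n lam
        = jordan k n mu ∘ₗ (f.fx : Module.End k (Fin n → k)) := by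
      have h := f.comm_b3
      simp only [Rlam] at h
      rw [hy, h3] at h
      exact h
    by_contra hne
    set F : Module.End k (Fin n → k) := f.fx with hF
    have hstep : F * (jordan k n lam - lam • 1) = (jordan k n mu - lam • 1) * F := by
      have h0 : F * jordan k n lam = jordan k n mu * F := hj
      rw [mul_sub, sub_mul, h0, mul_smul_comm, smul_mul_assoc, mul_one, one_mul]
    have hpow : ∀ j : ℕ, F * (jordan k n lam - lam • 1)^j
        = (jordan k n mu - lam • 1)^j * F := by
      intro j
      induction j with
      | zero => simp
      | succ j ih =>
        rw [pow_succ, ← mul_assoc, ih, mul_assoc, hstep, ← mul_assoc, ← pow_succ]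
    have hNl : jordan k n lam - lam • 1 = Nsh k n := by
      rw [jordan_eq n lam]; abel
    have hBn : (jordan k n mu - lam • 1)^n * F = 0 := by
      rw [← hpow n, hNl, Nsh_pow_n, mul_zero]
    have hB0 : (jordan k n mu - lam • 1)^n = 0 := by
      apply LinearMap.ext; intro w
      obtain ⟨v, rfl⟩ := hbx.surjective w
      have h := LinearMap.congr_fun hBn v
      exact h
    have hBu : IsUnit (jordan k n mu - lam • 1) := by
      have hJm : jordan k n mu - lam • 1
          = (mu - lam) • (1 : Module.End k (Fin n → k)) + Nsh k n := by
        have hs : (mu - lam) • (1 : Module.End k (Fin n → k)) = mu • 1 - lam • 1 :=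
          sub_smul mu lam (1 : Module.End k (Fin n → k))
        rw [jordan_eq n mu, hs]; abel
      rw [hJm]
      apply IsNilpotent.isUnit_add_left_of_commute ⟨n, Nsh_pow_n n⟩
      · have hmu : mu - lam ≠ 0 := sub_ne_zero.mpr (fun h => hne h.symm)
        have halg : ((mu - lam) • (1 : Module.End k (Fin n → k)))
            = algebraMap k (Module.End k (Fin n → k)) (mu - lam) :=
          (Algebra.algebraMap_eq_smul_one _).symm
        rw [halg]
        exact (isUnit_iff_ne_zero.mpr hmu).map (algebraMap k (Module.End k (Fin n → k)))
      · exact (Commute.one_right (Nsh k n)).smul_right (mu - lam)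
    haveI : Nontrivial (Module.End k (Fin n → k)) := by
      refine ⟨0, 1, fun h => ?_⟩
      have h2 := LinearMap.congr_fun h (Pi.single (⟨0, hn⟩ : Fin n) (1:k))
      have h3 := congrFun h2 ⟨0, hn⟩
      simp [Pi.single_eq_same] at h3
    exact hBu.not_isNilpotent ⟨n, hB0⟩
  · rintro ⟨rfl, rfl⟩
    exact ⟨Q0Hom.idHom _, ⟨fun a b h => h, fun b => ⟨b, rfl⟩⟩,
      ⟨fun a b h => h, fun b => ⟨b, rfl⟩⟩, ⟨fun a b h => h, fun b => ⟨b, rfl⟩⟩,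
      ⟨fun a b h => h, fun b => ⟨b, rfl⟩⟩, ⟨fun a b h => h, fun b => ⟨b, rfl⟩⟩⟩

end AuxLemmas

/-- `R_n(λ)` satisfies the relation
`m_{b₁}∘m_{a₁} + m_{b₂}∘m_{a₂} + m_{b₃}∘m_{a₃} = 0`; every endomorphism of `R_n(λ)`
is of the form `(f,f,f,f,f)` with `f` commuting with `J_n(λ)`; `R_n(λ)` is
indecomposable with local endomorphism ring; and `R_n(λ) ≅ R_m(μ)` iff `n = m` and
`λ = μ`. -/
theorem stmt15 (k : Type) [Field k] (n : ℕ) (hn : 1 ≤ n) (lam : k) :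
    ((Rlam k n lam).mb1 ∘ₗ (Rlam k n lam).ma1 + (Rlam k n lam).mb2 ∘ₗ (Rlam k n lam).ma2 +
      (Rlam k n lam).mb3 ∘ₗ (Rlam k n lam).ma3 = 0) ∧
    (∀ g : Q0Hom (Rlam k n lam) (Rlam k n lam),
      ∃ f : (Fin n → k) →ₗ[k] (Fin n → k),
        g.fx = f ∧ g.f1 = f ∧ g.f2 = f ∧ g.f3 = f ∧ g.fy = f ∧
        f ∘ₗ jordan k n lam = jordan k n lam ∘ₗ f) ∧
    (Rlam k n lam).Indecomposable ∧ IsLocalRing (Q0End (Rlam k n lam)) ∧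
    (∀ (m : ℕ), 1 ≤ m → ∀ mu : k,
      (Q0Iso (Rlam k n lam) (Rlam k m mu) ↔ n = m ∧ lam = mu)) := by
  refine ⟨?_, fun g => endo_eq g, rlam_indec n hn lam, q0end_local n hn lam,
    fun m hm mu => rlam_iso_iff n hn lam m hm mu⟩
  apply LinearMap.ext; intro v
  have hv : ∀ w : Fin n → k,
      w + ((-LinearMap.id - jordan k n lam : (Fin n → k) →ₗ[k] (Fin n → k))) w + jordan k n lam w = 0 := by
    intro w
    rw [LinearMap.sub_apply, LinearMap.neg_apply, LinearMap.id_apply]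
    abel
  exact hv v
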